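/- Let R ⊆ ℤ^d be finite and for each ℓ let B_ℓ(R) be the union of all ℓ-cubes containing at least half their points in R. Then there exist constants b₁(d), b₂(d) such that |∂B_ℓ(R)| ≤ b₁|∂R| and |B_ℓ(R) Δ B_{ℓ+1}(R)| ≤ b₂ 2^ℓ |∂R| for every ℓ ≥ 0. -/

import Mathlib

/-- Points of the lattice `ℤ^d`. -/
abbrev Pt (d : ℕ) := Fin d → ℤ

/-- Two lattice points are adjacent if they are distinct and at `L^∞`-distance at most 1
(i.e. exactly 1). -/
def adj {d : ℕ} (s t : Pt d) : Prop := s ≠ t ∧ ∀ i, |s i - t i| ≤ 1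

/-- A set `R ⊆ ℤ^d` is connected if any two of its points are joined by a path inside `R`
whose consecutive points are at `L^∞`-distance 1. -/
def connectedIn {d : ℕ} (R : Set (Pt d)) : Prop :=
  ∀ s ∈ R, ∀ t ∈ R, Relation.ReflTransGen (fun a b => a ∈ R ∧ b ∈ R ∧ adj a b) s t

/-- The external boundary `∂R = {s ∉ R : dist_∞(s, R) = 1}`. -/
def extBoundary {d : ℕ} (R : Set (Pt d)) : Set (Pt d) :=
  {s | s ∉ R ∧ ∃ t ∈ R, adj s t}

/-- The interior `Int R`: the union of the finite connected components of the complement. -/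
def latticeInt {d : ℕ} (R : Set (Pt d)) : Set (Pt d) :=
  {s | s ∉ R ∧
    Set.Finite {t | Relation.ReflTransGen (fun a b => a ∉ R ∧ b ∉ R ∧ adj a b) s t}}

/-- The `ℓ`-cube based at `2^ℓ s`: `(∏_i [2^ℓ s_i, 2^ℓ (s_i+1))) ∩ ℤ^d`. -/
def cube {d : ℕ} (ℓ : ℕ) (s : Pt d) : Set (Pt d) :=
  {t | ∀ i, 2 ^ ℓ * s i ≤ t i ∧ t i < 2 ^ ℓ * (s i + 1)}

/-- The coarse-grained region `B_ℓ(R)`: the union of all `ℓ`-cubes containing at least half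
of their `2^{ℓ d}` points in `R`. -/
def coarse {d : ℕ} (ℓ : ℕ) (R : Set (Pt d)) : Set (Pt d) :=
  ⋃ s ∈ {s : Pt d | 2 ^ (ℓ * d) ≤ 2 * (cube ℓ s ∩ R).ncard}, cube ℓ s

namespace CG
open scoped Classical
variable {d : ℕ}

/-! ### Generic counting lemmas -/

lemma ncard_prod {α β : Type*} (s : Set α) (t : Set β) :
    (s ×ˢ t).ncard = s.ncard * t.ncard := by
  rw [← Nat.card_coe_set_eq, ← Nat.card_coe_set_eq, ← Nat.card_coe_set_eq,
    Nat.card_congr (Equiv.Set.prod s t), Nat.card_prod]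

lemma mem_Icc' {a c t : Pt d} : t ∈ Set.Icc a c ↔ ∀ i, a i ≤ t i ∧ t i ≤ c i := by
  constructor
  · rintro ⟨h1, h2⟩ i; exact ⟨h1 i, h2 i⟩
  · intro h; exact ⟨fun i => (h i).1, fun i => (h i).2⟩

lemma ncard_Icc (a c : Pt d) : (Set.Icc a c).ncard = ∏ i, (c i + 1 - a i).toNat := by
  rw [← Finset.coe_Icc, Set.ncard_coe_finset, Pi.card_Icc]
  simp [Int.card_Icc]

lemma ncard_Icc_le (a c : Pt d) (N : ℕ) (hN : ∀ i, c i < a i + N) :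
    (Set.Icc a c).ncard ≤ N ^ d := by
  rw [ncard_Icc]
  calc ∏ i, (c i + 1 - a i).toNat ≤ ∏ _i : Fin d, N := by
        apply Finset.prod_le_prod
        · intro i _; exact Nat.zero_le _
        · intro i _; have := hN i; omega
    _ = N ^ d := by simp [Finset.prod_const]

lemma ncard_biUnion_le {β α : Type*} (T : Finset β) (f : β → Set α) :
    (⋃ s ∈ T, f s).ncard ≤ ∑ s ∈ T, (f s).ncard := by
  induction T using Finset.induction_on with
  | empty => simp
  | insert _ _ hnm ih =>
    rw [Finset.set_biUnion_insert, Finset.sum_insert hnm]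
    exact le_trans (Set.ncard_union_le _ _) (Nat.add_le_add_left ih _)

lemma sum_filter_card_le {α β : Type*} (T : Finset β) (A : Finset α)
    (P : β → α → Prop) [∀ s p, Decidable (P s p)] (K : ℕ)
    (hmul : ∀ p ∈ A, (T.filter (fun s => P s p)).card ≤ K) :
    (∑ s ∈ T, (A.filter (fun p => P s p)).card) ≤ K * A.card := by
  have h1 : ∀ s, (A.filter (fun p => P s p)).card = ∑ p ∈ A, if P s p then 1 else 0 := by
    intro s; rw [Finset.card_filter]
  have h2 : ∀ p, (T.filter (fun s => P s p)).card = ∑ s ∈ T, if P s p then 1 else 0 := by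
    intro p; rw [Finset.card_filter]
  calc (∑ s ∈ T, (A.filter (fun p => P s p)).card)
      = ∑ s ∈ T, ∑ p ∈ A, if P s p then 1 else 0 := Finset.sum_congr rfl (fun s _ => h1 s)
    _ = ∑ p ∈ A, ∑ s ∈ T, if P s p then 1 else 0 := Finset.sum_comm
    _ = ∑ p ∈ A, (T.filter (fun s => P s p)).card :=
        Finset.sum_congr rfl (fun p _ => (h2 p).symm)
    _ ≤ ∑ _p ∈ A, K := Finset.sum_le_sum (fun p hp => hmul p hp)
    _ = K * A.card := by rw [Finset.sum_const, smul_eq_mul, mul_comm]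

lemma ncard_inter_toFinset {α : Type*} (S : Set α) (hS : S.Finite) (B : Set α)
    [DecidablePred (· ∈ B)] :
    (S ∩ B).ncard = (hS.toFinset.filter (fun p => p ∈ B)).card := by
  rw [← Set.ncard_coe_finset]
  congr 1
  ext p
  simp [hS.mem_toFinset]

/-! ### Integer arithmetic helpers -/

lemma ediv_eq_iff {L x s : ℤ} (hL : 0 < L) : x / L = s ↔ L * s ≤ x ∧ x < L * (s + 1) := by
  constructor
  · intro h
    constructor
    · have h2 := (Int.le_ediv_iff_mul_le hL).1 (le_of_eq h.symm)
      linarith [mul_comm s L]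
    · have h2 := (Int.ediv_lt_iff_lt_mul hL).1 (show x / L < s + 1 by omega)
      linarith [mul_comm (s + 1) L]
  · rintro ⟨h1, h2⟩
    have ha : s ≤ x / L := (Int.le_ediv_iff_mul_le hL).2 (by linarith [mul_comm s L])
    have hb : x / L < s + 1 := (Int.ediv_lt_iff_lt_mul hL).2 (by linarith [mul_comm (s + 1) L])
    omega

lemma step_le {L A B x y : ℤ} (hL : 0 < L) (hx2 : x < L * (A + 1)) (hy1 : L * B ≤ y)
    (hxy : y ≤ x + 1) : B ≤ A + 1 := by
  by_contra hcon
  push_neg at hcon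
  have h2 : L * (A + 2) ≤ L * B := mul_le_mul_of_nonneg_left (by omega) hL.le
  have h3 : L * (A + 2) = L * (A + 1) + L := by ring
  linarith

lemma edge_coord {L A B x y : ℤ} (hL : 0 < L) (hxA2 : x < L * (A + 1))
    (hyB1 : L * B ≤ y) (hyB2 : y < L * (B + 1)) (hxA1 : L * A ≤ x)
    (hxy : |x - y| ≤ 1) (hne : A ≠ B) : x = L * A ∨ x = L * A + (L - 1) := by
  have habs := abs_le.1 hxy
  rcases lt_or_gt_of_ne hne with h | h
  · right
    have h2 : L * (A + 1) ≤ L * B := mul_le_mul_of_nonneg_left (by omega) hL.le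
    have h3 : L * (A + 1) = L * A + L := by ring
    linarith
  · left
    have h2 : L * (B + 1) ≤ L * A := mul_le_mul_of_nonneg_left (by omega) hL.le
    have h3 : L * (B + 1) = L * B + L := by ring
    linarith

lemma toNat_len (ℓ : ℕ) (z : ℤ) : ((z + (2 ^ ℓ - 1) + 1 - z).toNat) = 2 ^ ℓ := by
  have h : z + ((2:ℤ) ^ ℓ - 1) + 1 - z = ((2 ^ ℓ : ℕ) : ℤ) := by push_cast; ring
  rw [h, Int.toNat_natCast]

/-! ### The 1-d walk and the crossing lemma -/

lemma oneD (R : Set (Pt d)) (i : Fin d) :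
    ∀ n : ℕ, ∀ p q : Pt d, (q i - p i).natAbs = n → (∀ j, j ≠ i → p j = q j) →
      p ∈ R → q ∉ R →
      ∃ b, b ∉ R ∧ (∃ a ∈ R, adj b a) ∧ (∀ j, j ≠ i → b j = p j) ∧
        min (p i) (q i) ≤ b i ∧ b i ≤ max (p i) (q i) := by
  intro n
  induction n with
  | zero =>
    intro p q h0 hcoord hp hq
    exfalso
    apply hq
    have : p = q := by
      funext j
      by_cases hj : j = i
      · subst hj; omega
      · exact hcoord j hj
    rwa [← this]
  | succ n ih =>
    intro p q h0 hcoord hp hq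
    have hne : p i ≠ q i := by omega
    set e : ℤ := if p i < q i then 1 else -1 with he
    set p' : Pt d := Function.update p i (p i + e) with hp'
    have hp'i : p' i = p i + e := Function.update_self i _ p
    have hp'j : ∀ j, j ≠ i → p' j = p j := fun j hj => Function.update_of_ne hj _ p
    by_cases hmem : p' ∈ R
    · have habs : (q i - p' i).natAbs = n := by
        rw [hp'i]
        rcases lt_or_gt_of_ne hne with h | h
        · simp only [he, if_pos h]; omega
        · simp only [he, if_neg (not_lt.2 h.le)]; omega
      obtain ⟨b, hb1, hb2, hb3, hb4, hb5⟩ := ih p' q habs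
        (fun j hj => (hp'j j hj).trans (hcoord j hj)) hmem hq
      refine ⟨b, hb1, hb2, fun j hj => (hb3 j hj).trans (hp'j j hj), ?_, ?_⟩
      · rcases lt_or_gt_of_ne hne with h | h
        · simp only [he, if_pos h] at hp'i; omega
        · simp only [he, if_neg (not_lt.2 h.le)] at hp'i; omega
      · rcases lt_or_gt_of_ne hne with h | h
        · simp only [he, if_pos h] at hp'i; omega
        · simp only [he, if_neg (not_lt.2 h.le)] at hp'i; omega
    · refine ⟨p', hmem, ⟨p, hp, ?_, ?_⟩, hp'j, ?_, ?_⟩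
      · intro hEq
        have heq := congrFun hEq i
        rw [hp'i] at heq
        have he0 : e = 0 := by omega
        rcases lt_or_gt_of_ne hne with h | h
        · rw [he, if_pos h] at he0; omega
        · rw [he, if_neg (not_lt.2 h.le)] at he0; omega
      · intro j
        by_cases hj : j = i
        · subst hj
          rw [hp'i]
          have harith : p j + e - p j = e := by ring
          rw [harith]
          rcases lt_or_gt_of_ne hne with h | h
          · rw [he, if_pos h]; norm_num
          · rw [he, if_neg (not_lt.2 h.le)]; norm_num
        · rw [hp'j j hj]; simp
      · rcases lt_or_gt_of_ne hne with h | h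
        · simp only [he, if_pos h] at hp'i; omega
        · simp only [he, if_neg (not_lt.2 h.le)] at hp'i; omega
      · rcases lt_or_gt_of_ne hne with h | h
        · simp only [he, if_pos h] at hp'i; omega
        · simp only [he, if_neg (not_lt.2 h.le)] at hp'i; omega

lemma crossing (R : Set (Pt d)) (x y : Pt d) (hx : x ∈ R) (hy : y ∉ R) :
    ∃ i : Fin d, ∃ b : Pt d, b ∉ R ∧ (∃ a ∈ R, adj b a) ∧
      (∀ j : Fin d, (j : ℕ) < (i : ℕ) → b j = y j) ∧
      (∀ j : Fin d, (i : ℕ) < (j : ℕ) → b j = x j) ∧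
      min (x i) (y i) ≤ b i ∧ b i ≤ max (x i) (y i) := by
  classical
  set h : ℕ → Pt d := fun k j => if (j : ℕ) < k then y j else x j with hh
  have h0 : h 0 = x := by funext j; simp [hh]
  have hd' : h d = y := by funext j; simp [hh, j.isLt]
  have hex : ∃ k, h k ∉ R := ⟨d, by rw [hd']; exact hy⟩
  set k := Nat.find hex with hk
  have hkspec : h k ∉ R := Nat.find_spec hex
  have hkpos : 0 < k := by
    rcases Nat.eq_zero_or_pos k with h' | h'
    · exfalso; apply hkspec; rw [h', h0]; exact hx
    · exact h'
  have hkd : k ≤ d := Nat.find_le (by rw [hd']; exact hy)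
  have hklt : k - 1 < d := by omega
  set i : Fin d := ⟨k - 1, hklt⟩ with hi
  have hiv : (i : ℕ) = k - 1 := rfl
  have hprev : h (k - 1) ∈ R := by
    by_contra hc
    exact Nat.find_min hex (show k - 1 < Nat.find hex by omega) hc
  have hcoord : ∀ j, j ≠ i → h (k - 1) j = h k j := by
    intro j hj
    have hjv : (j : ℕ) ≠ k - 1 := fun hc => hj (Fin.ext hc)
    simp only [hh]
    rcases lt_or_gt_of_ne hjv with h' | h'
    · rw [if_pos h', if_pos (by omega)]
    · rw [if_neg (by omega), if_neg (by omega)]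
  obtain ⟨b, hb1, hb2, hb3, hb4, hb5⟩ :=
    oneD R i _ (h (k - 1)) (h k) rfl hcoord hprev hkspec
  have hpi : h (k - 1) i = x i := by
    simp only [hh, hiv]; rw [if_neg (by omega)]
  have hqi : h k i = y i := by
    simp only [hh, hiv]; rw [if_pos (by omega)]
  refine ⟨i, b, hb1, hb2, ?_, ?_, ?_, ?_⟩
  · intro j hj
    have hbj := hb3 j (by intro hc; rw [hc] at hj; omega)
    rw [hbj]; simp only [hh]; rw [if_pos (by omega)]
  · intro j hj
    have hbj := hb3 j (by intro hc; rw [hc] at hj; omega)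
    rw [hbj]; simp only [hh]; rw [if_neg (by omega)]
  · rw [hpi, hqi] at hb4; exact hb4
  · rw [hpi, hqi] at hb5; exact hb5

/-- chosen crossing direction -/
noncomputable def crI (R : Set (Pt d)) (x y : Pt d) (h : x ∈ R ∧ y ∉ R) : Fin d :=
  (crossing R x y h.1 h.2).choose

/-- chosen crossing boundary point -/
noncomputable def crB (R : Set (Pt d)) (x y : Pt d) (h : x ∈ R ∧ y ∉ R) : Pt d :=
  (crossing R x y h.1 h.2).choose_spec.choose

lemma crSpec (R : Set (Pt d)) (x y : Pt d) (h : x ∈ R ∧ y ∉ R) :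
    crB R x y h ∉ R ∧ (∃ a ∈ R, adj (crB R x y h) a) ∧
      (∀ j : Fin d, (j : ℕ) < (crI R x y h : ℕ) → crB R x y h j = y j) ∧
      (∀ j : Fin d, (crI R x y h : ℕ) < (j : ℕ) → crB R x y h j = x j) ∧
      min (x (crI R x y h)) (y (crI R x y h)) ≤ crB R x y h (crI R x y h) ∧
      crB R x y h (crI R x y h) ≤ max (x (crI R x y h)) (y (crI R x y h)) :=
  (crossing R x y h.1 h.2).choose_spec.choose_spec

/-! ### The box-counting (weak isoperimetric) lemma -/

lemma boxCount (R : Set (Pt d)) (a c : Pt d) (N : ℕ) (hd : 1 ≤ d)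
    (hac : ∀ i, a i ≤ c i) (hN : ∀ i, c i < a i + N) :
    (R ∩ Set.Icc a c).ncard * (Rᶜ ∩ Set.Icc a c).ncard
      ≤ d * N ^ (d + 1) * (extBoundary R ∩ Set.Icc a c).ncard := by
  classical
  set box := Set.Icc a c with hbox
  have hboxfin : box.Finite := Set.finite_Icc a c
  set D : Set (Pt d × Pt d) := (R ∩ box) ×ˢ (Rᶜ ∩ box) with hD
  set E : Set (Pt d × (Fin d × (Pt d × ℤ))) :=
    (extBoundary R ∩ box) ×ˢ ((Set.univ : Set (Fin d)) ×ˢ (box ×ˢ (Set.Icc (0:ℤ) (N - 1)))) with hE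
  have hEfin : E.Finite := by
    apply Set.Finite.prod (hboxfin.inter_of_right _)
    exact Set.Finite.prod (Set.finite_univ) (Set.Finite.prod hboxfin (Set.finite_Icc _ _))
  set f : Pt d × Pt d → Pt d × (Fin d × (Pt d × ℤ)) := fun z =>
    if h : z.1 ∈ R ∧ z.2 ∉ R then
      (crB R z.1 z.2 h, (crI R z.1 z.2 h,
        (fun j : Fin d => if (j : ℕ) < (crI R z.1 z.2 h : ℕ) then z.1 j else z.2 j,
         z.1 (crI R z.1 z.2 h) - a (crI R z.1 z.2 h))))
    else (fun _ => 0, (⟨0, hd⟩, (fun _ => 0, 0))) with hf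
  have key : D.ncard ≤ E.ncard := by
    apply Set.ncard_le_ncard_of_injOn f _ _ hEfin
    · rintro ⟨x, y⟩ ⟨⟨hxR, hxB⟩, ⟨hyR, hyB⟩⟩
      have hz : x ∈ R ∧ y ∉ R := ⟨hxR, hyR⟩
      have : f (x, y) = (crB R x y hz, (crI R x y hz,
          (fun j : Fin d => if (j : ℕ) < (crI R x y hz : ℕ) then x j else y j,
           x (crI R x y hz) - a (crI R x y hz)))) := dif_pos hz
      rw [this]
      clear this
      obtain ⟨hb1, hb2, hb3, hb4, hb5, hb6⟩ := crSpec R x y hz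
      set i := crI R x y hz
      set b := crB R x y hz
      refine ⟨⟨⟨hb1, hb2⟩, ?_⟩, Set.mem_univ _, ?_, ?_, ?_⟩

      · dsimp only
        rw [mem_Icc'] ; intro j
        rcases lt_trichotomy (j : ℕ) (i : ℕ) with h' | h' | h'
        · rw [hb3 j h']; exact ⟨(mem_Icc'.1 hyB j).1, (mem_Icc'.1 hyB j).2⟩
        · have hji : j = i := Fin.ext h'
          rw [hji]
          have h1 := (mem_Icc'.1 hxB i).1
          have h2 := (mem_Icc'.1 hxB i).2
          have h3 := (mem_Icc'.1 hyB i).1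
          have h4 := (mem_Icc'.1 hyB i).2
          constructor
          · calc a i ≤ min (x i) (y i) := le_min h1 h3
              _ ≤ b i := hb5
          · calc b i ≤ max (x i) (y i) := hb6
              _ ≤ c i := max_le h2 h4
        · rw [hb4 j h']; exact ⟨(mem_Icc'.1 hxB j).1, (mem_Icc'.1 hxB j).2⟩
      · dsimp only
        rw [mem_Icc']; intro j
        by_cases h' : (j : ℕ) < (i : ℕ)
        · rw [if_pos h']; exact ⟨(mem_Icc'.1 hxB j).1, (mem_Icc'.1 hxB j).2⟩
        · rw [if_neg h']; exact ⟨(mem_Icc'.1 hyB j).1, (mem_Icc'.1 hyB j).2⟩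
      · have h1 : a i ≤ x i := (mem_Icc'.1 hxB i).1
        dsimp only
        omega
      · dsimp only
        have h2 : x i ≤ c i := (mem_Icc'.1 hxB i).2
        have h3 := hN i
        omega
    · rintro ⟨x, y⟩ ⟨⟨hxR, hxB⟩, ⟨hyR, hyB⟩⟩ ⟨x', y'⟩ ⟨⟨hxR', hxB'⟩, ⟨hyR', hyB'⟩⟩ heq
      have hz : x ∈ R ∧ y ∉ R := ⟨hxR, hyR⟩
      have hz' : x' ∈ R ∧ y' ∉ R := ⟨hxR', hyR'⟩
      rw [show f (x, y) = _ from dif_pos hz, show f (x', y') = _ from dif_pos hz'] at heq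
      obtain ⟨hb1, hb2, hb3, hb4, hb5, hb6⟩ := crSpec R x y hz
      obtain ⟨hb1', hb2', hb3', hb4', hb5', hb6'⟩ := crSpec R x' y' hz'
      have hB : crB R x y hz = crB R x' y' hz' := congrArg Prod.fst heq
      have hI : crI R x y hz = crI R x' y' hz' := congrArg (fun p => p.2.1) heq
      have hW : (fun j : Fin d => if (j : ℕ) < (crI R x y hz : ℕ) then x j else y j)
          = (fun j : Fin d => if (j : ℕ) < (crI R x' y' hz' : ℕ) then x' j else y' j) :=
        congrArg (fun p => p.2.2.1) heq
      have hZ : x (crI R x y hz) - a (crI R x y hz)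
          = x' (crI R x' y' hz') - a (crI R x' y' hz') := congrArg (fun p => p.2.2.2) heq
      set i := crI R x y hz
      rw [← hI] at hb3' hb4' hZ hW
      have hx' : x = x' := by
        funext j
        rcases lt_trichotomy (j : ℕ) (i : ℕ) with h' | h' | h'
        · have := congrFun hW j
          rw [if_pos h', if_pos h'] at this
          exact this
        · have hji : j = i := Fin.ext h'
          rw [hji]
          omega
        · rw [← hb4 j h', hB, hb4' j h']
      have hy' : y = y' := by
        funext j
        rcases lt_trichotomy (j : ℕ) (i : ℕ) with h' | h' | h'
        · rw [← hb3 j h', hB, hb3' j h']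
        · have := congrFun hW j
          rw [if_neg (by omega), if_neg (by omega)] at this
          exact this
        · have := congrFun hW j
          rw [if_neg (by omega), if_neg (by omega)] at this
          exact this
      rw [Prod.mk.injEq]
      exact ⟨hx', hy'⟩
  have hDcard : D.ncard = (R ∩ box).ncard * (Rᶜ ∩ box).ncard := ncard_prod _ _
  have hEcard : E.ncard ≤ (extBoundary R ∩ box).ncard * (d * (N ^ d * N)) := by
    rw [hE, ncard_prod, ncard_prod, ncard_prod]
    apply Nat.mul_le_mul_left
    have h1 : (Set.univ : Set (Fin d)).ncard = d := by
      rw [Set.ncard_univ]; simp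
    have h2 : (Set.Icc (0:ℤ) (N - 1)).ncard ≤ N := by
      rw [← Finset.coe_Icc, Set.ncard_coe_finset, Int.card_Icc]; omega
    rw [h1]
    exact Nat.mul_le_mul_left d (Nat.mul_le_mul (ncard_Icc_le a c N hN) h2)
  calc (R ∩ box).ncard * (Rᶜ ∩ box).ncard = D.ncard := hDcard.symm
    _ ≤ E.ncard := key
    _ ≤ (extBoundary R ∩ box).ncard * (d * (N ^ d * N)) := hEcard
    _ = d * N ^ (d + 1) * (extBoundary R ∩ box).ncard := by ring

/-! ### Cubes and indices -/

/-- the index of the ℓ-cube containing a point -/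
def idx (ℓ : ℕ) (t : Pt d) : Pt d := fun i => t i / 2 ^ ℓ

lemma hLpos (ℓ : ℕ) : (0 : ℤ) < 2 ^ ℓ := by positivity

lemma mem_cube {ℓ : ℕ} {s t : Pt d} : t ∈ cube ℓ s ↔ idx ℓ t = s := by
  constructor
  · intro h
    funext i
    exact (ediv_eq_iff (hLpos ℓ)).2 ⟨(h i).1, (h i).2⟩
  · intro h
    intro i
    exact (ediv_eq_iff (hLpos ℓ)).1 (congrFun h i)

lemma cube_eq_Icc (ℓ : ℕ) (s : Pt d) :
    cube ℓ s = Set.Icc (fun i => 2 ^ ℓ * s i) (fun i => 2 ^ ℓ * s i + (2 ^ ℓ - 1)) := by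
  ext t
  rw [mem_Icc']
  constructor
  · intro h i; have := h i; constructor <;> [exact this.1; nlinarith [this.2]]
  · intro h i; have := h i
    refine ⟨this.1, ?_⟩
    nlinarith [this.2]

lemma cube_finite (ℓ : ℕ) (s : Pt d) : (cube ℓ s).Finite := by
  rw [cube_eq_Icc]; exact Set.finite_Icc _ _

lemma ncard_cube (ℓ : ℕ) (s : Pt d) : (cube ℓ s).ncard = 2 ^ (ℓ * d) := by
  rw [cube_eq_Icc, ncard_Icc]
  have : ∀ i : Fin d, ((fun i => 2 ^ ℓ * s i + (2 ^ ℓ - 1)) i + 1 - (fun i => 2 ^ ℓ * s i) i).toNat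
      = 2 ^ ℓ := by
    intro i
    simp only
    exact toNat_len ℓ _
  rw [Finset.prod_congr rfl (fun i _ => this i), Finset.prod_const]
  simp [← pow_mul, mul_comm ℓ d]

/-- fullness of a cube -/
def full (ℓ : ℕ) (R : Set (Pt d)) (s : Pt d) : Prop :=
  2 ^ (ℓ * d) ≤ 2 * (cube ℓ s ∩ R).ncard

lemma mem_coarse {ℓ : ℕ} {R : Set (Pt d)} {t : Pt d} :
    t ∈ coarse ℓ R ↔ full ℓ R (idx ℓ t) := by
  simp only [coarse, Set.mem_iUnion, Set.mem_setOf_eq, exists_prop]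
  constructor
  · rintro ⟨s, hs, hts⟩
    rw [mem_cube.1 hts]; exact hs
  · intro h
    exact ⟨idx ℓ t, h, mem_cube.2 rfl⟩

lemma notfull_compl {ℓ : ℕ} {R : Set (Pt d)} {s : Pt d} (h : ¬ full ℓ R s) :
    2 ^ (ℓ * d) ≤ 2 * (cube ℓ s ∩ Rᶜ).ncard := by
  have hsplit := Set.ncard_inter_add_ncard_diff_eq_ncard (cube ℓ s) R (cube_finite ℓ s)
  have hdiff : cube ℓ s \ R = cube ℓ s ∩ Rᶜ := rfl
  rw [hdiff, ncard_cube] at hsplit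
  unfold full at h
  omega

lemma full_imp_mem_image {ℓ : ℕ} {R : Set (Pt d)} {s : Pt d} (h : full ℓ R s) :
    s ∈ idx ℓ '' R := by
  unfold full at h
  have hne : (cube ℓ s ∩ R).ncard ≠ 0 := by
    intro h0; rw [h0] at h; simp at h
  obtain ⟨t, htc, htR⟩ := Set.nonempty_of_ncard_ne_zero hne
  exact ⟨t, htR, mem_cube.1 htc⟩

/-! ### Faces and layers -/

/-- the boundary layer of a cube -/
def layer (ℓ : ℕ) (s : Pt d) : Set (Pt d) :=
  {t | t ∈ cube ℓ s ∧ ∃ i, t i = 2 ^ ℓ * s i ∨ t i = 2 ^ ℓ * s i + (2 ^ ℓ - 1)}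

lemma ncard_face_le (ℓ : ℕ) (a c : Pt d) (i : Fin d)
    (hlen : ∀ j, j ≠ i → (c j + 1 - a j).toNat ≤ 2 ^ ℓ) (hlen_i : (c i + 1 - a i).toNat ≤ 1) :
    (Set.Icc a c).ncard ≤ 2 ^ (ℓ * (d - 1)) := by
  rw [ncard_Icc]
  have key : ∏ j, (c j + 1 - a j).toNat
      ≤ (c i + 1 - a i).toNat * ∏ j ∈ Finset.univ.erase i, (c j + 1 - a j).toNat :=
    le_of_eq (Finset.mul_prod_erase Finset.univ _ (Finset.mem_univ i)).symm
  calc ∏ j, (c j + 1 - a j).toNat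
      ≤ (c i + 1 - a i).toNat * ∏ j ∈ Finset.univ.erase i, (c j + 1 - a j).toNat := key
    _ ≤ 1 * ∏ j ∈ Finset.univ.erase i, 2 ^ ℓ := by
        apply Nat.mul_le_mul hlen_i
        apply Finset.prod_le_prod
        · intro j _; exact Nat.zero_le _
        · intro j hj; exact hlen j (Finset.ne_of_mem_erase hj)
    _ = 2 ^ (ℓ * (d - 1)) := by
        rw [one_mul, Finset.prod_const, Finset.card_erase_of_mem (Finset.mem_univ i)]
        simp [← pow_mul, mul_comm ℓ (d - 1)]

lemma ncard_layer_le (ℓ : ℕ) (s : Pt d) :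
    (layer ℓ s).ncard ≤ 2 * d * 2 ^ (ℓ * (d - 1)) := by
  set a : Pt d := fun i => 2 ^ ℓ * s i with ha
  set c : Pt d := fun i => 2 ^ ℓ * s i + (2 ^ ℓ - 1) with hc
  have hsub : layer ℓ s ⊆ ⋃ i ∈ (Finset.univ : Finset (Fin d)),
      (Set.Icc a (Function.update c i (a i)) ∪ Set.Icc (Function.update a i (c i)) c) := by
    rintro t ⟨htc, i, hi⟩
    have hbd : ∀ j, a j ≤ t j ∧ t j ≤ c j := by
      intro j
      have := htc j
      constructor
      · exact this.1
      · simp only [hc]; nlinarith [this.2]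
    refine Set.mem_biUnion (Finset.mem_univ i) ?_
    rcases hi with hi | hi
    · left
      rw [mem_Icc']
      intro j
      refine ⟨(hbd j).1, ?_⟩
      by_cases hj : j = i
      · rw [hj, Function.update_self]
        exact le_of_eq hi
      · rw [Function.update_of_ne hj]; exact (hbd j).2
    · right
      rw [mem_Icc']
      intro j
      refine ⟨?_, (hbd j).2⟩
      by_cases hj : j = i
      · rw [hj, Function.update_self]
        exact le_of_eq hi.symm
      · rw [Function.update_of_ne hj]; exact (hbd j).1
  calc (layer ℓ s).ncard
      ≤ (⋃ i ∈ (Finset.univ : Finset (Fin d)),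
          (Set.Icc a (Function.update c i (a i)) ∪ Set.Icc (Function.update a i (c i)) c)).ncard := by
        refine Set.ncard_le_ncard hsub (Set.Finite.biUnion (Finset.finite_toSet _) ?_)
        intro i _
        exact (Set.finite_Icc _ _).union (Set.finite_Icc _ _)
    _ ≤ ∑ i ∈ (Finset.univ : Finset (Fin d)),
          ((Set.Icc a (Function.update c i (a i)) ∪ Set.Icc (Function.update a i (c i)) c)).ncard :=
        ncard_biUnion_le _ _
    _ ≤ ∑ _i ∈ (Finset.univ : Finset (Fin d)), (2 ^ (ℓ * (d - 1)) + 2 ^ (ℓ * (d - 1))) := by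
        apply Finset.sum_le_sum
        intro i _
        refine le_trans (Set.ncard_union_le _ _) (Nat.add_le_add ?_ ?_)
        · apply ncard_face_le ℓ
          · intro j hj
            rw [Function.update_of_ne hj]
            simp only [hc, ha]
            exact le_of_eq (toNat_len ℓ _)
          · rw [Function.update_self]
            omega
        · apply ncard_face_le ℓ
          · intro j hj
            rw [Function.update_of_ne hj]
            simp only [hc, ha]
            exact le_of_eq (toNat_len ℓ _)
          · rw [Function.update_self]
            omega
    _ = 2 * d * 2 ^ (ℓ * (d - 1)) := by
        rw [Finset.sum_const, Finset.card_univ, Fintype.card_fin, smul_eq_mul]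
        ring

/-! ### Shared arithmetic for both parts -/

lemma count_arith (hd : 1 ≤ d) (ℓ X Y B : ℕ)
    (hX : 2 ^ (ℓ * d) ≤ 2 * X) (hY : 2 ^ (ℓ * d) ≤ 2 * Y)
    (hXY : X * Y ≤ d * (2 ^ (ℓ + 1)) ^ (d + 1) * B) :
    2 ^ (ℓ * (d - 1)) ≤ d * 2 ^ (d + 3) * B := by
  obtain ⟨d', rfl⟩ : ∃ d', d = d' + 1 := ⟨d - 1, by omega⟩
  have hsub : (d' + 1) - 1 = d' := by omega
  rw [hsub]
  have h1 : 2 ^ (ℓ * (d' + 1)) * 2 ^ (ℓ * (d' + 1)) ≤ (2 * X) * (2 * Y) :=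
    Nat.mul_le_mul hX hY
  have h2 : (2 * X) * (2 * Y) = 4 * (X * Y) := by ring
  have h3 : 2 ^ (ℓ * (d' + 1)) * 2 ^ (ℓ * (d' + 1))
      ≤ 4 * ((d' + 1) * (2 ^ (ℓ + 1)) ^ ((d' + 1) + 1) * B) := by
    calc 2 ^ (ℓ * (d' + 1)) * 2 ^ (ℓ * (d' + 1)) ≤ (2 * X) * (2 * Y) := h1
      _ = 4 * (X * Y) := h2
      _ ≤ 4 * ((d' + 1) * (2 ^ (ℓ + 1)) ^ ((d' + 1) + 1) * B) := Nat.mul_le_mul_left 4 hXY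
  have e1 : 2 ^ (ℓ * (d' + 1)) * 2 ^ (ℓ * (d' + 1))
      = 2 ^ (ℓ * d') * 2 ^ (ℓ * (d' + 1) + ℓ) := by
    rw [← pow_add, ← pow_add]
    congr 1
    ring
  have e2 : 4 * ((d' + 1) * (2 ^ (ℓ + 1)) ^ ((d' + 1) + 1) * B)
      = ((d' + 1) * 2 ^ ((d' + 1) + 3) * B) * 2 ^ (ℓ * (d' + 1) + ℓ) := by
    rw [← pow_mul]
    have hexp : (ℓ + 1) * ((d' + 1) + 1) = ((d' + 1) + 1) + (ℓ * (d' + 1) + ℓ) := by ring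
    rw [hexp, pow_add]
    have h4 : (4 : ℕ) = 2 ^ 2 := rfl
    rw [h4, pow_add]
    ring
  rw [e1, e2] at h3
  exact Nat.le_of_mul_le_mul_right h3 (Nat.pow_pos (by norm_num))

lemma card_Icc_pm (q : Pt d) : (Finset.Icc (q - 1) (q + 1)).card = 3 ^ d := by
  rw [Pi.card_Icc]
  have h : ∀ i : Fin d, (Finset.Icc ((q - 1) i) ((q + 1) i)).card = 3 := by
    intro i
    rw [Int.card_Icc]
    have h1 : (q + 1) i = q i + 1 := rfl
    have h2 : (q - 1) i = q i - 1 := rfl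
    rw [h1, h2]
    omega
  rw [Finset.prod_congr rfl (fun i _ => h i), Finset.prod_const, Finset.card_univ,
    Fintype.card_fin]

lemma card_Icc_two (q : Pt d) :
    (Finset.Icc (fun i => 2 * q i) (fun i => 2 * q i + 1) : Finset (Pt d)).card = 2 ^ d := by
  rw [Pi.card_Icc]
  have h : ∀ i : Fin d, (Finset.Icc (2 * q i) (2 * q i + 1)).card = 2 := by
    intro i
    rw [Int.card_Icc]
    omega
  rw [Finset.prod_congr rfl (fun i _ => h i), Finset.prod_const, Finset.card_univ,
    Fintype.card_fin]

lemma extBoundary_finite {R : Set (Pt d)} (hR : R.Finite) : (extBoundary R).Finite := by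
  apply Set.Finite.subset (hR.biUnion (fun t _ => Set.finite_Icc (t - 1) (t + 1)))
  rintro b ⟨hbR, t, htR, hadj⟩
  refine Set.mem_biUnion htR ?_
  rw [mem_Icc']
  intro i
  have h3 := abs_le.1 (hadj.2 i)
  have h1 : (t - 1) i = t i - 1 := rfl
  have h2 : (t + 1) i = t i + 1 := rfl
  rw [h1, h2]
  omega

/-! ### Part 1: boundary of the coarse-grained region -/

/-- a chosen full neighbour of an interface cell -/
noncomputable def gnb (ℓ : ℕ) (R : Set (Pt d)) (s : Pt d) : Pt d :=
  if h : ∃ s', full ℓ R s' ∧ s' ≠ s ∧ ∀ i, |s' i - s i| ≤ 1 then h.choose else s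

lemma gnb_spec {ℓ : ℕ} {R : Set (Pt d)} {s : Pt d}
    (h : ∃ s', full ℓ R s' ∧ s' ≠ s ∧ ∀ i, |s' i - s i| ≤ 1) :
    full ℓ R (gnb ℓ R s) ∧ gnb ℓ R s ≠ s ∧ ∀ i, |gnb ℓ R s i - s i| ≤ 1 := by
  unfold gnb
  rw [dif_pos h]
  exact h.choose_spec

/-- the bounding box of an interface cell and its chosen neighbour: bottom corner -/
noncomputable def avv (ℓ : ℕ) (R : Set (Pt d)) (s : Pt d) : Pt d :=
  fun i => 2 ^ ℓ * min (s i) (gnb ℓ R s i)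

/-- top corner -/
noncomputable def cvv (ℓ : ℕ) (R : Set (Pt d)) (s : Pt d) : Pt d :=
  fun i => 2 ^ ℓ * max (s i) (gnb ℓ R s i) + (2 ^ ℓ - 1)

lemma cube_subset_box1 (ℓ : ℕ) (R : Set (Pt d)) (s : Pt d) :
    cube ℓ s ⊆ Set.Icc (avv ℓ R s) (cvv ℓ R s) := by
  intro t ht
  rw [mem_Icc']
  intro i
  have h := ht i
  have hmin : 2 ^ ℓ * min (s i) (gnb ℓ R s i) ≤ 2 ^ ℓ * s i :=
    mul_le_mul_of_nonneg_left (min_le_left _ _) (hLpos ℓ).le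
  have hmax : 2 ^ ℓ * s i ≤ 2 ^ ℓ * max (s i) (gnb ℓ R s i) :=
    mul_le_mul_of_nonneg_left (le_max_left _ _) (hLpos ℓ).le
  have hexp : (2:ℤ) ^ ℓ * (s i + 1) = 2 ^ ℓ * s i + 2 ^ ℓ := by ring
  constructor
  · show 2 ^ ℓ * min (s i) (gnb ℓ R s i) ≤ t i
    linarith [h.1]
  · show t i ≤ 2 ^ ℓ * max (s i) (gnb ℓ R s i) + (2 ^ ℓ - 1)
    linarith [h.2]

lemma cube_subset_box2 (ℓ : ℕ) (R : Set (Pt d)) (s : Pt d) :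
    cube ℓ (gnb ℓ R s) ⊆ Set.Icc (avv ℓ R s) (cvv ℓ R s) := by
  intro t ht
  rw [mem_Icc']
  intro i
  have h := ht i
  have hmin : 2 ^ ℓ * min (s i) (gnb ℓ R s i) ≤ 2 ^ ℓ * gnb ℓ R s i :=
    mul_le_mul_of_nonneg_left (min_le_right _ _) (hLpos ℓ).le
  have hmax : 2 ^ ℓ * gnb ℓ R s i ≤ 2 ^ ℓ * max (s i) (gnb ℓ R s i) :=
    mul_le_mul_of_nonneg_left (le_max_right _ _) (hLpos ℓ).le
  have hexp : (2:ℤ) ^ ℓ * (gnb ℓ R s i + 1) = 2 ^ ℓ * gnb ℓ R s i + 2 ^ ℓ := by ring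
  constructor
  · show 2 ^ ℓ * min (s i) (gnb ℓ R s i) ≤ t i
    linarith [h.1]
  · show t i ≤ 2 ^ ℓ * max (s i) (gnb ℓ R s i) + (2 ^ ℓ - 1)
    linarith [h.2]

lemma part1 (hd : 1 ≤ d) (R : Set (Pt d)) (hR : R.Finite) (ℓ : ℕ) :
    (extBoundary (coarse ℓ R)).ncard ≤ (d ^ 2 * 2 ^ (d + 4) * 3 ^ d) * (extBoundary R).ncard := by
  classical
  have hL : (0:ℤ) < 2 ^ ℓ := hLpos ℓ
  have hRB : (extBoundary R).Finite := extBoundary_finite hR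
  set J : Set (Pt d) := {s | ¬ full ℓ R s ∧ ∃ s', full ℓ R s' ∧ s' ≠ s ∧ ∀ i, |s' i - s i| ≤ 1}
    with hJdef
  have hJfin : J.Finite := by
    have hFullfin : {s : Pt d | full ℓ R s}.Finite :=
      Set.Finite.subset (hR.image (idx ℓ)) (fun s hs => full_imp_mem_image hs)
    apply Set.Finite.subset (hFullfin.biUnion (fun s' _ => Set.finite_Icc (s' - 1) (s' + 1)))
    rintro s ⟨hnf, s', hfull, hne, hcl⟩
    refine Set.mem_biUnion hfull ?_
    rw [mem_Icc']
    intro i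
    have h3 := abs_le.1 (hcl i)
    have h1 : (s' - 1) i = s' i - 1 := rfl
    have h2 : (s' + 1) i = s' i + 1 := rfl
    rw [h1, h2]
    omega
  set JF := hJfin.toFinset with hJF
  have hgspec : ∀ s ∈ J, full ℓ R (gnb ℓ R s) ∧ gnb ℓ R s ≠ s ∧ ∀ i, |gnb ℓ R s i - s i| ≤ 1 :=
    fun _ hs => gnb_spec hs.2
  -- the boundary of the coarse region is covered by layers of interface cells
  have hsubB : extBoundary (coarse ℓ R) ⊆ ⋃ s ∈ JF, layer ℓ s := by
    rintro t ⟨htn, u, hu, hadj⟩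
    have hfull' : full ℓ R (idx ℓ u) := mem_coarse.1 hu
    have hnf : ¬ full ℓ R (idx ℓ t) := fun h => htn (mem_coarse.2 h)
    have hne : idx ℓ u ≠ idx ℓ t := fun h => hnf (h ▸ hfull')
    have htc : ∀ i, 2 ^ ℓ * idx ℓ t i ≤ t i ∧ t i < 2 ^ ℓ * (idx ℓ t i + 1) :=
      mem_cube.2 rfl
    have huc : ∀ i, 2 ^ ℓ * idx ℓ u i ≤ u i ∧ u i < 2 ^ ℓ * (idx ℓ u i + 1) :=
      mem_cube.2 rfl
    have hclose : ∀ i, |idx ℓ u i - idx ℓ t i| ≤ 1 := by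
      intro i
      have hd1 := abs_le.1 (hadj.2 i)
      have hA := step_le hL (huc i).2 (htc i).1 (by omega)
      have hB := step_le hL (htc i).2 (huc i).1 (by omega)
      rw [abs_le]
      omega
    have hsJ : idx ℓ t ∈ J := ⟨hnf, idx ℓ u, hfull', hne, hclose⟩
    obtain ⟨i, hi⟩ := Function.ne_iff.1 hne
    have hedge := edge_coord hL (htc i).2 (huc i).1 (huc i).2 (htc i).1 (hadj.2 i) (Ne.symm hi)
    exact Set.mem_biUnion (hJfin.mem_toFinset.2 hsJ) ⟨mem_cube.2 rfl, i, hedge⟩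
  -- each interface cell forces boundary points of R in its bounding box
  have hkey : ∀ s ∈ JF, 2 ^ (ℓ * (d - 1))
      ≤ d * 2 ^ (d + 3) * (extBoundary R ∩ Set.Icc (avv ℓ R s) (cvv ℓ R s)).ncard := by
    intro s hsF
    have hsJ : s ∈ J := hJfin.mem_toFinset.1 hsF
    obtain ⟨hgf, hgne, hgcl⟩ := hgspec s hsJ
    have hnf : ¬ full ℓ R s := hsJ.1
    have hac : ∀ i, avv ℓ R s i ≤ cvv ℓ R s i := by
      intro i
      simp only [avv, cvv]
      have h1 : 2 ^ ℓ * min (s i) (gnb ℓ R s i) ≤ 2 ^ ℓ * max (s i) (gnb ℓ R s i) :=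
        mul_le_mul_of_nonneg_left min_le_max hL.le
      linarith
    have hN : ∀ i, cvv ℓ R s i < avv ℓ R s i + ((2 ^ (ℓ + 1) : ℕ) : ℤ) := by
      intro i
      simp only [avv, cvv]
      have h3 := abs_le.1 (hgcl i)
      have hmm : max (s i) (gnb ℓ R s i) ≤ min (s i) (gnb ℓ R s i) + 1 := by
        rcases le_total (s i) (gnb ℓ R s i) with h | h
        · rw [max_eq_right h, min_eq_left h]; omega
        · rw [max_eq_left h, min_eq_right h]; omega
      have h4 : 2 ^ ℓ * max (s i) (gnb ℓ R s i) ≤ 2 ^ ℓ * (min (s i) (gnb ℓ R s i) + 1) :=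
        mul_le_mul_of_nonneg_left hmm hL.le
      have h5 : (2:ℤ) ^ ℓ * (min (s i) (gnb ℓ R s i) + 1)
          = 2 ^ ℓ * min (s i) (gnb ℓ R s i) + 2 ^ ℓ := by ring
      have hcast : (((2:ℕ) ^ (ℓ + 1) : ℕ) : ℤ) = 2 * 2 ^ ℓ := by push_cast [pow_succ]; ring
      rw [hcast]
      linarith
    have hXY := boxCount R (avv ℓ R s) (cvv ℓ R s) (2 ^ (ℓ + 1)) hd hac hN
    have hX : 2 ^ (ℓ * d) ≤ 2 * (R ∩ Set.Icc (avv ℓ R s) (cvv ℓ R s)).ncard := by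
      refine le_trans hgf (Nat.mul_le_mul_left 2 ?_)
      refine Set.ncard_le_ncard ?_ ((Set.finite_Icc _ _).inter_of_right _)
      rintro t ⟨h1, h2⟩
      exact ⟨h2, cube_subset_box2 ℓ R s h1⟩
    have hY : 2 ^ (ℓ * d) ≤ 2 * (Rᶜ ∩ Set.Icc (avv ℓ R s) (cvv ℓ R s)).ncard := by
      refine le_trans (notfull_compl hnf) (Nat.mul_le_mul_left 2 ?_)
      refine Set.ncard_le_ncard ?_ ((Set.finite_Icc _ _).inter_of_right _)
      rintro t ⟨h1, h2⟩
      exact ⟨h2, cube_subset_box1 ℓ R s h1⟩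
    exact count_arith hd ℓ _ _ _ hX hY hXY
  -- multiplicity of the bounding boxes
  have hmult : ∀ p ∈ hRB.toFinset,
      (JF.filter (fun s => p ∈ Set.Icc (avv ℓ R s) (cvv ℓ R s))).card ≤ 3 ^ d := by
    intro p _
    have hsub : JF.filter (fun s => p ∈ Set.Icc (avv ℓ R s) (cvv ℓ R s))
        ⊆ Finset.Icc (idx ℓ p - 1) (idx ℓ p + 1) := by
      intro s hs
      obtain ⟨hsF, hpbox⟩ := Finset.mem_filter.1 hs
      have hsJ : s ∈ J := hJfin.mem_toFinset.1 hsF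
      obtain ⟨_, _, hgcl⟩ := hgspec s hsJ
      have hb := mem_Icc'.1 hpbox
      have key : ∀ i, idx ℓ p i - 1 ≤ s i ∧ s i ≤ idx ℓ p i + 1 := by
        intro i
        have h3 := abs_le.1 (hgcl i)
        have hlow : 2 ^ ℓ * (s i - 1) ≤ p i := by
          have hm : s i - 1 ≤ min (s i) (gnb ℓ R s i) := by
            rcases le_total (s i) (gnb ℓ R s i) with h | h
            · rw [min_eq_left h]; omega
            · rw [min_eq_right h]; omega
          have h6 := mul_le_mul_of_nonneg_left hm hL.le
          have hbb := (hb i).1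
          simp only [avv] at hbb
          linarith
        have hhigh : p i < 2 ^ ℓ * ((s i + 1) + 1) := by
          have hm : max (s i) (gnb ℓ R s i) ≤ s i + 1 := by
            rcases le_total (s i) (gnb ℓ R s i) with h | h
            · rw [max_eq_right h]; omega
            · rw [max_eq_left h]; omega
          have h6 := mul_le_mul_of_nonneg_left hm hL.le
          have hbb := (hb i).2
          simp only [cvv] at hbb
          have h7 : (2:ℤ) ^ ℓ * ((s i + 1) + 1) = 2 ^ ℓ * (s i + 1) + 2 ^ ℓ := by ring
          have h8 : (2:ℤ) ^ ℓ * (s i + 1) = 2 ^ ℓ * s i + 2 ^ ℓ := by ring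
          linarith
        have hlo : s i - 1 ≤ idx ℓ p i :=
          (Int.le_ediv_iff_mul_le hL).2 (by linarith [mul_comm (s i - 1) ((2:ℤ) ^ ℓ)])
        have hhi : idx ℓ p i < (s i + 1) + 1 :=
          (Int.ediv_lt_iff_lt_mul hL).2 (by linarith [mul_comm ((s i + 1) + 1) ((2:ℤ) ^ ℓ)])
        omega
      rw [Finset.mem_Icc]
      constructor
      · intro i
        show (idx ℓ p - 1) i ≤ s i
        have h9 : (idx ℓ p - 1) i = idx ℓ p i - 1 := rfl
        rw [h9]
        exact (key i).1
      · intro i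
        show s i ≤ (idx ℓ p + 1) i
        have h9 : (idx ℓ p + 1) i = idx ℓ p i + 1 := rfl
        rw [h9]
        exact (key i).2
    calc (JF.filter (fun s => p ∈ Set.Icc (avv ℓ R s) (cvv ℓ R s))).card
        ≤ (Finset.Icc (idx ℓ p - 1) (idx ℓ p + 1)).card := Finset.card_le_card hsub
      _ = 3 ^ d := card_Icc_pm _
  have main1 : (extBoundary (coarse ℓ R)).ncard ≤ JF.card * (2 * d * 2 ^ (ℓ * (d - 1))) := by
    calc (extBoundary (coarse ℓ R)).ncard
        ≤ (⋃ s ∈ JF, layer ℓ s).ncard := by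
          refine Set.ncard_le_ncard hsubB (Set.Finite.biUnion (Finset.finite_toSet _) ?_)
          intro s _
          exact (cube_finite ℓ s).subset (fun t ht => ht.1)
      _ ≤ ∑ s ∈ JF, (layer ℓ s).ncard := ncard_biUnion_le _ _
      _ ≤ ∑ _s ∈ JF, (2 * d * 2 ^ (ℓ * (d - 1))) :=
          Finset.sum_le_sum (fun s _ => ncard_layer_le ℓ s)
      _ = JF.card * (2 * d * 2 ^ (ℓ * (d - 1))) := by rw [Finset.sum_const, smul_eq_mul]
  have main2 : JF.card * 2 ^ (ℓ * (d - 1))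
      ≤ (d * 2 ^ (d + 3)) * (3 ^ d * (extBoundary R).ncard) := by
    calc JF.card * 2 ^ (ℓ * (d - 1)) = ∑ _s ∈ JF, 2 ^ (ℓ * (d - 1)) := by
          rw [Finset.sum_const, smul_eq_mul]
      _ ≤ ∑ s ∈ JF, d * 2 ^ (d + 3) * (extBoundary R ∩ Set.Icc (avv ℓ R s) (cvv ℓ R s)).ncard :=
          Finset.sum_le_sum hkey
      _ = d * 2 ^ (d + 3) * ∑ s ∈ JF, (extBoundary R ∩ Set.Icc (avv ℓ R s) (cvv ℓ R s)).ncard := by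
          rw [Finset.mul_sum]
      _ ≤ d * 2 ^ (d + 3) * (3 ^ d * (extBoundary R).ncard) := by
          apply Nat.mul_le_mul_left
          have heach : ∀ s ∈ JF, (extBoundary R ∩ Set.Icc (avv ℓ R s) (cvv ℓ R s)).ncard
              = (hRB.toFinset.filter (fun p => p ∈ Set.Icc (avv ℓ R s) (cvv ℓ R s))).card :=
            fun s _ => ncard_inter_toFinset _ hRB _
          rw [Finset.sum_congr rfl heach]
          calc ∑ s ∈ JF,
                (hRB.toFinset.filter (fun p => p ∈ Set.Icc (avv ℓ R s) (cvv ℓ R s))).card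
              ≤ 3 ^ d * hRB.toFinset.card :=
                sum_filter_card_le JF hRB.toFinset
                  (fun s p => p ∈ Set.Icc (avv ℓ R s) (cvv ℓ R s)) (3 ^ d) hmult
            _ = 3 ^ d * (extBoundary R).ncard := by rw [Set.ncard_eq_toFinset_card _ hRB]
  calc (extBoundary (coarse ℓ R)).ncard ≤ JF.card * (2 * d * 2 ^ (ℓ * (d - 1))) := main1
    _ = 2 * d * (JF.card * 2 ^ (ℓ * (d - 1))) := by ring
    _ ≤ 2 * d * ((d * 2 ^ (d + 3)) * (3 ^ d * (extBoundary R).ncard)) :=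
        Nat.mul_le_mul_left _ main2
    _ = (d ^ 2 * 2 ^ (d + 4) * 3 ^ d) * (extBoundary R).ncard := by ring

/-! ### Part 2: comparing consecutive scales -/

/-- the index of the parent cube -/
def par (s : Pt d) : Pt d := fun i => s i / 2

lemma idx_succ (ℓ : ℕ) (t : Pt d) : idx (ℓ + 1) t = par (idx ℓ t) := by
  funext i
  show t i / 2 ^ (ℓ + 1) = (t i / 2 ^ ℓ) / 2
  have hL : (0:ℤ) < 2 ^ ℓ := hLpos ℓ
  have hL' : (0:ℤ) < 2 ^ (ℓ + 1) := hLpos (ℓ + 1)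
  set m : ℤ := t i / 2 ^ ℓ with hm
  have hmb := (ediv_eq_iff hL).1 hm.symm
  symm
  rw [ediv_eq_iff (by norm_num : (0:ℤ) < 2)]
  set q : ℤ := t i / 2 ^ (ℓ + 1) with hq
  have hqb := (ediv_eq_iff hL').1 hq.symm
  have hps : (2:ℤ) ^ (ℓ + 1) = 2 ^ ℓ * 2 := pow_succ 2 ℓ
  constructor
  · -- 2 * q ≤ m
    by_contra hcon
    push_neg at hcon
    have h1 : m + 1 ≤ 2 * q := by omega
    have h2 : 2 ^ ℓ * (m + 1) ≤ 2 ^ ℓ * (2 * q) := mul_le_mul_of_nonneg_left h1 hL.le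
    have h3 : (2:ℤ) ^ ℓ * (2 * q) = 2 ^ (ℓ + 1) * q := by rw [hps]; ring
    linarith [hmb.2, hqb.1]
  · -- m < 2 * (q + 1)
    by_contra hcon
    push_neg at hcon
    have h2 : 2 ^ ℓ * (2 * (q + 1)) ≤ 2 ^ ℓ * m := mul_le_mul_of_nonneg_left hcon hL.le
    have h3 : (2:ℤ) ^ ℓ * (2 * (q + 1)) = 2 ^ (ℓ + 1) * (q + 1) := by rw [hps]; ring
    linarith [hmb.1, hqb.2]

lemma cube_subset_parent (ℓ : ℕ) (s : Pt d) : cube ℓ s ⊆ cube (ℓ + 1) (par s) := by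
  intro t ht i
  have h := ht i
  have hL : (0:ℤ) < 2 ^ ℓ := hLpos ℓ
  have hps : (2:ℤ) ^ (ℓ + 1) = 2 ^ ℓ * 2 := pow_succ 2 ℓ
  have h1 : 2 * (s i / 2) ≤ s i := by omega
  have h2 : s i ≤ 2 * (s i / 2) + 1 := by omega
  constructor
  · have h3 : (2:ℤ) ^ ℓ * (2 * (s i / 2)) ≤ 2 ^ ℓ * s i := mul_le_mul_of_nonneg_left h1 hL.le
    have h4 : (2:ℤ) ^ (ℓ + 1) * par s i = 2 ^ ℓ * (2 * (s i / 2)) := by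
      show (2:ℤ) ^ (ℓ + 1) * (s i / 2) = _
      rw [hps]; ring
    linarith [h.1]
  · have h5 : s i + 1 ≤ 2 * (s i / 2) + 2 := by omega
    have h3 : (2:ℤ) ^ ℓ * (s i + 1) ≤ 2 ^ ℓ * (2 * (s i / 2) + 2) :=
      mul_le_mul_of_nonneg_left h5 hL.le
    have h4 : (2:ℤ) ^ (ℓ + 1) * (par s i + 1) = 2 ^ ℓ * (2 * (s i / 2) + 2) := by
      show (2:ℤ) ^ (ℓ + 1) * ((s i / 2) + 1) = _
      rw [hps]; ring
    linarith [h.2]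

lemma part2 (hd : 1 ≤ d) (R : Set (Pt d)) (hR : R.Finite) (ℓ : ℕ) :
    (symmDiff (coarse ℓ R) (coarse (ℓ + 1) R)).ncard
      ≤ (d * 2 ^ (2 * d + 3)) * 2 ^ ℓ * (extBoundary R).ncard := by
  classical
  have hRB : (extBoundary R).Finite := extBoundary_finite hR
  set Bad : Set (Pt d) := {s | (full ℓ R s ∧ ¬ full (ℓ + 1) R (par s))
      ∨ (¬ full ℓ R s ∧ full (ℓ + 1) R (par s))} with hBdef
  have hBadfin : Bad.Finite := by
    apply Set.Finite.subset ((hR.image (idx ℓ)).union ((hR.image (idx (ℓ + 1))).biUnion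
      (fun q _ => Set.finite_Icc (fun i => 2 * q i) (fun i => 2 * q i + 1))))
    rintro s (⟨h1, _⟩ | ⟨_, h2⟩)
    · exact Or.inl (full_imp_mem_image h1)
    · refine Or.inr (Set.mem_biUnion (full_imp_mem_image h2) ?_)
      rw [mem_Icc']
      intro i
      constructor
      · show 2 * (s i / 2) ≤ s i
        omega
      · show s i ≤ 2 * (s i / 2) + 1
        omega
  set BadF := hBadfin.toFinset with hBadF
  have hsubΔ : symmDiff (coarse ℓ R) (coarse (ℓ + 1) R) ⊆ ⋃ s ∈ BadF, cube ℓ s := by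
    intro t ht
    rw [Set.mem_symmDiff] at ht
    have hidx : idx (ℓ + 1) t = par (idx ℓ t) := idx_succ ℓ t
    have hsB : idx ℓ t ∈ Bad := by
      rcases ht with ⟨h1, h2⟩ | ⟨h1, h2⟩
      · exact Or.inl ⟨mem_coarse.1 h1, fun hc => h2 (mem_coarse.2 (by rw [hidx]; exact hc))⟩
      · exact Or.inr ⟨fun hc => h2 (mem_coarse.2 hc), by rw [← hidx]; exact mem_coarse.1 h1⟩
    exact Set.mem_biUnion (hBadfin.mem_toFinset.2 hsB) (mem_cube.2 rfl)
  have hkey : ∀ s ∈ BadF, 2 ^ (ℓ * (d - 1))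
      ≤ d * 2 ^ (d + 3) * (extBoundary R ∩ Set.Icc (fun i => 2 ^ (ℓ + 1) * par s i)
          (fun i => 2 ^ (ℓ + 1) * par s i + (2 ^ (ℓ + 1) - 1))).ncard := by
    intro s hsF
    have hsB : s ∈ Bad := hBadfin.mem_toFinset.1 hsF
    have hparent := cube_eq_Icc (ℓ + 1) (par s)
    have hL' : (0:ℤ) < 2 ^ (ℓ + 1) := hLpos (ℓ + 1)
    have hac : ∀ i, (fun i => (2:ℤ) ^ (ℓ + 1) * par s i) i
        ≤ (fun i => (2:ℤ) ^ (ℓ + 1) * par s i + (2 ^ (ℓ + 1) - 1)) i := by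
      intro i
      simp only
      linarith
    have hN : ∀ i, (fun i => (2:ℤ) ^ (ℓ + 1) * par s i + (2 ^ (ℓ + 1) - 1)) i
        < (fun i => (2:ℤ) ^ (ℓ + 1) * par s i) i + ((2 ^ (ℓ + 1) : ℕ) : ℤ) := by
      intro i
      simp only
      have hcast : (((2:ℕ) ^ (ℓ + 1) : ℕ) : ℤ) = 2 ^ (ℓ + 1) := by push_cast; ring
      rw [hcast]
      linarith
    have hXY := boxCount R (fun i => 2 ^ (ℓ + 1) * par s i)
      (fun i => 2 ^ (ℓ + 1) * par s i + (2 ^ (ℓ + 1) - 1)) (2 ^ (ℓ + 1)) hd hac hN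
    have hpow : (2:ℕ) ^ (ℓ * d) ≤ 2 ^ ((ℓ + 1) * d) :=
      Nat.pow_le_pow_right (by norm_num) (Nat.mul_le_mul_right d (Nat.le_succ ℓ))
    have hcase : 2 ^ (ℓ * d) ≤ 2 * (R ∩ Set.Icc (fun i => 2 ^ (ℓ + 1) * par s i)
          (fun i => 2 ^ (ℓ + 1) * par s i + (2 ^ (ℓ + 1) - 1))).ncard
        ∧ 2 ^ (ℓ * d) ≤ 2 * (Rᶜ ∩ Set.Icc (fun i => 2 ^ (ℓ + 1) * par s i)
          (fun i => 2 ^ (ℓ + 1) * par s i + (2 ^ (ℓ + 1) - 1))).ncard := by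
      rcases hsB with ⟨h1, h2⟩ | ⟨h1, h2⟩
      · constructor
        · refine le_trans h1 (Nat.mul_le_mul_left 2 (Set.ncard_le_ncard ?_
            ((Set.finite_Icc _ _).inter_of_right _)))
          rintro t ⟨ht1, ht2⟩
          exact ⟨ht2, hparent ▸ (cube_subset_parent ℓ s ht1)⟩
        · refine le_trans hpow (le_trans (notfull_compl h2) (Nat.mul_le_mul_left 2
            (Set.ncard_le_ncard ?_ ((Set.finite_Icc _ _).inter_of_right _))))
          rintro t ⟨ht1, ht2⟩
          exact ⟨ht2, hparent ▸ ht1⟩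
      · constructor
        · refine le_trans hpow (le_trans h2 (Nat.mul_le_mul_left 2
            (Set.ncard_le_ncard ?_ ((Set.finite_Icc _ _).inter_of_right _))))
          rintro t ⟨ht1, ht2⟩
          exact ⟨ht2, hparent ▸ ht1⟩
        · refine le_trans (notfull_compl h1) (Nat.mul_le_mul_left 2
            (Set.ncard_le_ncard ?_ ((Set.finite_Icc _ _).inter_of_right _)))
          rintro t ⟨ht1, ht2⟩
          exact ⟨ht2, hparent ▸ (cube_subset_parent ℓ s ht1)⟩
    exact count_arith hd ℓ _ _ _ hcase.1 hcase.2 hXY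
  have hmult : ∀ p ∈ hRB.toFinset,
      (BadF.filter (fun s => p ∈ Set.Icc (fun i => 2 ^ (ℓ + 1) * par s i)
        (fun i => 2 ^ (ℓ + 1) * par s i + (2 ^ (ℓ + 1) - 1)))).card ≤ 2 ^ d := by
    intro p _
    have hsub : BadF.filter (fun s => p ∈ Set.Icc (fun i => 2 ^ (ℓ + 1) * par s i)
          (fun i => 2 ^ (ℓ + 1) * par s i + (2 ^ (ℓ + 1) - 1)))
        ⊆ Finset.Icc (fun i => 2 * idx (ℓ + 1) p i) (fun i => 2 * idx (ℓ + 1) p i + 1) := by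
      intro s hs
      obtain ⟨_, hpbox⟩ := Finset.mem_filter.1 hs
      have hpc : p ∈ cube (ℓ + 1) (par s) := by rw [cube_eq_Icc]; exact hpbox
      have hq : idx (ℓ + 1) p = par s := mem_cube.1 hpc
      rw [Finset.mem_Icc]
      constructor
      · intro i
        show (fun i => 2 * idx (ℓ + 1) p i) i ≤ s i
        simp only
        rw [hq]
        show 2 * (s i / 2) ≤ s i
        omega
      · intro i
        show s i ≤ (fun i => 2 * idx (ℓ + 1) p i + 1) i
        simp only
        rw [hq]
        show s i ≤ 2 * (s i / 2) + 1
        omega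
    calc (BadF.filter (fun s => p ∈ Set.Icc (fun i => 2 ^ (ℓ + 1) * par s i)
          (fun i => 2 ^ (ℓ + 1) * par s i + (2 ^ (ℓ + 1) - 1)))).card
        ≤ (Finset.Icc (fun i => 2 * idx (ℓ + 1) p i)
            (fun i => 2 * idx (ℓ + 1) p i + 1) : Finset (Pt d)).card := Finset.card_le_card hsub
      _ = 2 ^ d := card_Icc_two _
  have main1 : (symmDiff (coarse ℓ R) (coarse (ℓ + 1) R)).ncard ≤ BadF.card * 2 ^ (ℓ * d) := by
    calc (symmDiff (coarse ℓ R) (coarse (ℓ + 1) R)).ncard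
        ≤ (⋃ s ∈ BadF, cube ℓ s).ncard := by
          refine Set.ncard_le_ncard hsubΔ (Set.Finite.biUnion (Finset.finite_toSet _) ?_)
          intro s _
          exact cube_finite ℓ s
      _ ≤ ∑ s ∈ BadF, (cube ℓ s).ncard := ncard_biUnion_le _ _
      _ = ∑ _s ∈ BadF, 2 ^ (ℓ * d) := Finset.sum_congr rfl (fun s _ => ncard_cube ℓ s)
      _ = BadF.card * 2 ^ (ℓ * d) := by rw [Finset.sum_const, smul_eq_mul]
  have main2 : BadF.card * 2 ^ (ℓ * (d - 1))
      ≤ (d * 2 ^ (d + 3)) * (2 ^ d * (extBoundary R).ncard) := by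
    calc BadF.card * 2 ^ (ℓ * (d - 1)) = ∑ _s ∈ BadF, 2 ^ (ℓ * (d - 1)) := by
          rw [Finset.sum_const, smul_eq_mul]
      _ ≤ ∑ s ∈ BadF, d * 2 ^ (d + 3) * (extBoundary R ∩ Set.Icc (fun i => 2 ^ (ℓ + 1) * par s i)
            (fun i => 2 ^ (ℓ + 1) * par s i + (2 ^ (ℓ + 1) - 1))).ncard :=
          Finset.sum_le_sum hkey
      _ = d * 2 ^ (d + 3) * ∑ s ∈ BadF, (extBoundary R ∩ Set.Icc (fun i => 2 ^ (ℓ + 1) * par s i)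
            (fun i => 2 ^ (ℓ + 1) * par s i + (2 ^ (ℓ + 1) - 1))).ncard := by
          rw [Finset.mul_sum]
      _ ≤ d * 2 ^ (d + 3) * (2 ^ d * (extBoundary R).ncard) := by
          apply Nat.mul_le_mul_left
          have heach : ∀ s ∈ BadF, (extBoundary R ∩ Set.Icc (fun i => 2 ^ (ℓ + 1) * par s i)
              (fun i => 2 ^ (ℓ + 1) * par s i + (2 ^ (ℓ + 1) - 1))).ncard
              = (hRB.toFinset.filter (fun p => p ∈ Set.Icc (fun i => 2 ^ (ℓ + 1) * par s i)
                (fun i => 2 ^ (ℓ + 1) * par s i + (2 ^ (ℓ + 1) - 1)))).card :=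
            fun s _ => ncard_inter_toFinset _ hRB _
          rw [Finset.sum_congr rfl heach]
          calc ∑ s ∈ BadF, (hRB.toFinset.filter (fun p => p ∈ Set.Icc
                  (fun i => 2 ^ (ℓ + 1) * par s i)
                  (fun i => 2 ^ (ℓ + 1) * par s i + (2 ^ (ℓ + 1) - 1)))).card
              ≤ 2 ^ d * hRB.toFinset.card :=
                sum_filter_card_le BadF hRB.toFinset
                  (fun s p => p ∈ Set.Icc (fun i => 2 ^ (ℓ + 1) * par s i)
                    (fun i => 2 ^ (ℓ + 1) * par s i + (2 ^ (ℓ + 1) - 1))) (2 ^ d) hmult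
            _ = 2 ^ d * (extBoundary R).ncard := by rw [Set.ncard_eq_toFinset_card _ hRB]
  obtain ⟨d', rfl⟩ : ∃ d', d = d' + 1 := ⟨d - 1, by omega⟩
  have hsub1 : (d' + 1) - 1 = d' := rfl
  rw [hsub1] at main2
  have hsplit : (2:ℕ) ^ (ℓ * (d' + 1)) = 2 ^ ℓ * 2 ^ (ℓ * d') := by
    rw [← pow_add]
    congr 1
    ring
  calc (symmDiff (coarse ℓ R) (coarse (ℓ + 1) R)).ncard
      ≤ BadF.card * 2 ^ (ℓ * (d' + 1)) := main1
    _ = 2 ^ ℓ * (BadF.card * 2 ^ (ℓ * d')) := by rw [hsplit]; ring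
    _ ≤ 2 ^ ℓ * (((d' + 1) * 2 ^ ((d' + 1) + 3)) * (2 ^ (d' + 1) * (extBoundary R).ncard)) :=
        Nat.mul_le_mul_left _ main2
    _ = ((d' + 1) * 2 ^ (2 * (d' + 1) + 3)) * 2 ^ ℓ * (extBoundary R).ncard := by ring

end CG

/-- there exist constants `b₁(d), b₂(d)` such that for every finite
`R ⊆ ℤ^d` and every `ℓ ≥ 0`, `|∂B_ℓ(R)| ≤ b₁ |∂R|` and
`|B_ℓ(R) Δ B_{ℓ+1}(R)| ≤ b₂ 2^ℓ |∂R|`. -/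
theorem coarse_graining_bounds (d : ℕ) (hd : 1 ≤ d) :
    ∃ b₁ b₂ : ℕ, 0 < b₁ ∧ 0 < b₂ ∧
      ∀ (R : Set (Pt d)), R.Finite → ∀ ℓ : ℕ,
        (extBoundary (coarse ℓ R)).ncard ≤ b₁ * (extBoundary R).ncard ∧
        (symmDiff (coarse ℓ R) (coarse (ℓ + 1) R)).ncard
          ≤ b₂ * 2 ^ ℓ * (extBoundary R).ncard := by
  have hdpos : 0 < d := hd
  refine ⟨d ^ 2 * 2 ^ (d + 4) * 3 ^ d, d * 2 ^ (2 * d + 3), by positivity, by positivity, ?_⟩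
  intro R hR ℓ
  exact ⟨CG.part1 hd R hR ℓ, CG.part2 hd R hR ℓ⟩
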